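/- Let p, q be distinct positive integers with p ≡ q (mod 2). In the polynomial ring ℂ[c,h] in two variables c and h, the polynomial φ_{p,q} = h² − S(c)·h + P(c) is irreducible, where S(c) = ((p² + q² − 2)/16)·(1 − 2c/3) + (p − q)²/4 and P(c) = (1/256)·(2(p−q)² − (1 − 2c/3)(pq − p − q − 1))·(2(p−q)² − (1 − 2c/3)(pq + p + q + 1)). -/
import Mathlib


open MvPolynomial

/-- The polynomial `S(c) = ((p²+q²−2)/16)(1 − 2c/3) + (p−q)²/4` in `ℂ[c,h]`
(with `c = X 0`). -/
noncomputable def SPoly (p q : ℕ) : MvPolynomial (Fin 2) ℂ :=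
  C (((p : ℂ) ^ 2 + (q : ℂ) ^ 2 - 2) / 16) * (1 - C (2 / 3) * X 0) +
    C (((p : ℂ) - (q : ℂ)) ^ 2 / 4)

/-- The polynomial
`P(c) = (1/256)(2(p−q)² − (1 − 2c/3)(pq−p−q−1))(2(p−q)² − (1 − 2c/3)(pq+p+q+1))`
in `ℂ[c,h]` (with `c = X 0`). -/
noncomputable def PPoly (p q : ℕ) : MvPolynomial (Fin 2) ℂ :=
  C (1 / 256) *
    (C (2 * ((p : ℂ) - (q : ℂ)) ^ 2) -
      (1 - C (2 / 3) * X 0) * C ((p : ℂ) * q - p - q - 1)) *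
    (C (2 * ((p : ℂ) - (q : ℂ)) ^ 2) -
      (1 - C (2 / 3) * X 0) * C ((p : ℂ) * q + p + q + 1))

/-- The Kac polynomial `φ_{p,q} = h² − S(c)·h + P(c)` in `ℂ[c,h]`
(with `c = X 0` and `h = X 1`). -/
noncomputable def phiPQ (p q : ℕ) : MvPolynomial (Fin 2) ℂ :=
  (X 1) ^ 2 - SPoly p q * X 1 + PPoly p q


noncomputable def sC (p q : ℕ) : Polynomial ℂ :=
  Polynomial.C (((p : ℂ) ^ 2 + (q : ℂ) ^ 2 - 2) / 16) * (1 - Polynomial.C (2 / 3) * Polynomial.X) +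
    Polynomial.C (((p : ℂ) - (q : ℂ)) ^ 2 / 4)

noncomputable def pC (p q : ℕ) : Polynomial ℂ :=
  Polynomial.C (1 / 256) *
    (Polynomial.C (2 * ((p : ℂ) - (q : ℂ)) ^ 2) -
      (1 - Polynomial.C (2 / 3) * Polynomial.X) * Polynomial.C ((p : ℂ) * q - p - q - 1)) *
    (Polynomial.C (2 * ((p : ℂ) - (q : ℂ)) ^ 2) -
      (1 - Polynomial.C (2 / 3) * Polynomial.X) * Polynomial.C ((p : ℂ) * q + p + q + 1))

noncomputable def PhiPQ (p q : ℕ) : Polynomial (Polynomial ℂ) :=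
  Polynomial.X ^ 2 - Polynomial.C (sC p q) * Polynomial.X + Polynomial.C (pC p q)

lemma PhiPQ_eq (p q : ℕ) : PhiPQ p q =
    Polynomial.C 1 * Polynomial.X ^ 2 + Polynomial.C (-(sC p q)) * Polynomial.X
      + Polynomial.C (pC p q) := by
  simp only [PhiPQ, map_one, map_neg, one_mul, neg_mul]; ring

lemma PhiPQ_monic (p q : ℕ) : (PhiPQ p q).Monic := by
  rw [Polynomial.Monic, PhiPQ_eq, Polynomial.leadingCoeff_quadratic one_ne_zero]

lemma PhiPQ_natDegree (p q : ℕ) : (PhiPQ p q).natDegree = 2 := by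
  rw [PhiPQ_eq]; exact Polynomial.natDegree_quadratic one_ne_zero

-- key numeric fact
lemma no_root (p q : ℕ) (hp : 0 < p) (hq : 0 < q) (hpq : p ≠ q) (s : Polynomial ℂ)
    (heval : (PhiPQ p q).eval s = 0) : False := by
  have heval' : s ^ 2 - sC p q * s + pC p q = 0 := by
    simpa [PhiPQ] using heval
  set g : Polynomial ℂ := 2 * s - sC p q with hgdef
  have hg : g ^ 2 = sC p q ^ 2 - 4 * pC p q := by
    rw [hgdef]; linear_combination (4 : Polynomial ℂ) * heval'
  -- evaluate at 3/2
  have h0 : Polynomial.eval (3/2 : ℂ) (sC p q ^ 2 - 4 * pC p q) = 0 := by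
    simp [sC, pC]; ring
  have hg0 : g.eval (3/2) = 0 := by
    have : (g.eval (3/2)) ^ 2 = 0 := by
      rw [← Polynomial.eval_pow, hg, h0]
    exact pow_eq_zero_iff (by norm_num) |>.mp this
  -- derivative
  have hd : Polynomial.eval (3/2 : ℂ) (Polynomial.derivative (g ^ 2)) =
      Polynomial.eval (3/2 : ℂ) (Polynomial.derivative (sC p q ^ 2 - 4 * pC p q)) := by
    rw [hg]
  rw [Polynomial.derivative_pow] at hd
  simp only [Polynomial.eval_mul, Polynomial.eval_pow, Polynomial.eval_C, hg0,
    Polynomial.eval_natCast] at hd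
  have hd' : (0 : ℂ) = Polynomial.eval (3/2 : ℂ)
      (Polynomial.derivative (sC p q ^ 2 - 4 * pC p q)) := by
    rw [← hd]; ring
  simp only [sC, pC, Polynomial.derivative_sub, Polynomial.derivative_pow,
    Polynomial.derivative_mul, Polynomial.derivative_C, Polynomial.derivative_X,
    Polynomial.derivative_one, Polynomial.derivative_add, Polynomial.derivative_ofNat,
    Polynomial.eval_mul, Polynomial.eval_add, Polynomial.eval_sub, Polynomial.eval_pow,
    Polynomial.eval_C, Polynomial.eval_X, Polynomial.eval_one, Polynomial.eval_ofNat,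
    Polynomial.eval_natCast, Polynomial.eval_zero] at hd'
  norm_num at hd'
  -- now hd' is a complex equation; derive the key factored identity
  have key : ((p : ℂ) - q) ^ 2 * (((p : ℂ) + q) ^ 2 - 2) = 0 := by
    linear_combination (48 : ℂ) * hd'
  rcases mul_eq_zero.mp key with h | h
  · have h1 : (p : ℂ) - q = 0 := pow_eq_zero_iff (n := 2) (by norm_num) |>.mp h
    exact hpq (Nat.cast_injective (sub_eq_zero.mp h1))
  · have h2 : (((p + q) ^ 2 : ℕ) : ℂ) = ((2 : ℕ) : ℂ) := by push_cast; linear_combination h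
    have h3 : (p + q) ^ 2 = 2 := Nat.cast_injective h2
    have h4 : 2 ≤ p + q := by omega
    nlinarith [h3, h4]

lemma PhiPQ_irreducible (p q : ℕ) (hp : 0 < p) (hq : 0 < q) (hpq : p ≠ q) :
    Irreducible (PhiPQ p q) := by
  set R := Polynomial ℂ
  set K := FractionRing R
  rw [(PhiPQ_monic p q).irreducible_iff_irreducible_map_fraction_map (K := K)]
  rw [Polynomial.irreducible_iff_roots_eq_zero_of_degree_le_three]
  · by_contra hroots
    obtain ⟨r, hr⟩ := Multiset.exists_mem_of_ne_zero hroots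
    rw [Polynomial.mem_roots] at hr
    · have hint : IsIntegral R r := ⟨PhiPQ p q, PhiPQ_monic p q, by
        rwa [Polynomial.eval₂_eq_eval_map]⟩
      obtain ⟨s, hs⟩ := IsIntegrallyClosed.isIntegral_iff.mp hint
      have heval : (PhiPQ p q).eval s = 0 := by
        apply IsFractionRing.injective R K
        rw [map_zero, ← Polynomial.eval₂_at_apply, hs, ← Polynomial.eval_map]
        exact hr
      exact no_root p q hp hq hpq s heval
    · exact ((PhiPQ_monic p q).map _).ne_zero
  · rw [(PhiPQ_monic p q).natDegree_map, PhiPQ_natDegree]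
  · rw [(PhiPQ_monic p q).natDegree_map, PhiPQ_natDegree]; norm_num

noncomputable def eEquiv : MvPolynomial (Fin 2) ℂ ≃ₐ[ℂ] Polynomial (Polynomial ℂ) :=
  (renameEquiv ℂ (Equiv.swap 0 1)).trans ((MvPolynomial.finSuccEquiv ℂ 1).trans
    (Polynomial.mapAlgEquiv ((renameEquiv ℂ (Equiv.equivPUnit.{1,1} (Fin 1))).trans (pUnitAlgEquiv ℂ))))

lemma eEquiv_X1 : eEquiv (X 1) = Polynomial.X := by
  simp [eEquiv, MvPolynomial.finSuccEquiv_X_zero]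

lemma eEquiv_X0 : eEquiv (X 0) = Polynomial.C Polynomial.X := by
  have h : (1 : Fin 2) = Fin.succ 0 := rfl
  rw [eEquiv]
  simp only [AlgEquiv.trans_apply, renameEquiv_apply, rename_X, Equiv.swap_apply_left, h,
    MvPolynomial.finSuccEquiv_X_succ]
  simp

lemma eEquiv_C (a : ℂ) : eEquiv (C a) = Polynomial.C (Polynomial.C a) := by
  simp [eEquiv, MvPolynomial.finSuccEquiv_apply]

lemma eEquiv_phi (p q : ℕ) : eEquiv (phiPQ p q) = PhiPQ p q := by
  simp only [phiPQ, SPoly, PPoly, map_add, map_sub, map_mul, map_pow, map_one,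
    eEquiv_X0, eEquiv_X1, eEquiv_C, PhiPQ, sC, pC, Polynomial.C_add, Polynomial.C_mul,
    Polynomial.C_sub, Polynomial.C_1]

/-- For distinct positive integers `p ≠ q` of the same parity, the polynomial
`φ_{p,q} = h² − S(c)h + P(c)` is irreducible in `ℂ[c,h]`. -/
theorem phiPQ_irreducible (p q : ℕ) (hp : 0 < p) (hq : 0 < q) (hpq : p ≠ q)
    (hpar : p % 2 = q % 2) : Irreducible (phiPQ p q) := by
  have h := PhiPQ_irreducible p q hp hq hpq
  rw [← eEquiv_phi] at h
  exact (MulEquiv.irreducible_iff eEquiv).mp h
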